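/- Let q ≡ 2 (mod 3) be a prime power, C₀ ≤ F_{q³}* the subgroup of order q² + q + 1, L₀ = {h : Tr_{q³/q}(h) = 0, N_{q³/q}(h) = 1}, and R = {λ + h^{q²} − h^q : λ ∈ F_q, h ∈ L₀}. Suppose z = xy ∈ R with x ∈ C₀ and y ∈ F_q*. Then x⁻¹y ∈ −R. Consequently, for each e ∈ F_q*, the set {x⁻¹y : x ∈ C₀, y ∈ F_q*, xy ∈ eR} equals −eR. -/

import Mathlib

/-- `h` belongs to the set `L₀ = {h ∈ F_{q³}* : Tr(h) = 0, N(h) = 1}`. -/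
def memL0 (q : ℕ) {K : Type} [Field K] (h : K) : Prop :=
  h ≠ 0 ∧ h + h ^ q + h ^ q ^ 2 = 0 ∧ h ^ (1 + q + q ^ 2) = 1

/-- `r` belongs to the set `R = {λ + h^{q²} − h^q : λ ∈ F_q, h ∈ L₀}`. -/
def memR (q : ℕ) {K : Type} [Field K] (r : K) : Prop :=
  ∃ l h : K, l ^ q = l ∧ memL0 q h ∧ r = l + h ^ q ^ 2 - h ^ q

theorem Re'_eq_neg_eR (q : ℕ) (hq : q % 3 = 2)
    (K : Type) [Field K] [Fintype K] (hK : Fintype.card K = q ^ 3) :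
    (∀ x y : K, x ^ (q ^ 2 + q + 1) = 1 → y ≠ 0 → y ^ q = y →
        memR q (x * y) → ∃ r : K, memR q r ∧ x⁻¹ * y = -r) ∧
      (∀ e : K, e ≠ 0 → e ^ q = e →
        {w : K | ∃ x y : K, x ^ (q ^ 2 + q + 1) = 1 ∧ y ≠ 0 ∧ y ^ q = y ∧
            (∃ r : K, memR q r ∧ x * y = e * r) ∧ w = x⁻¹ * y} =
          {w : K | ∃ r : K, memR q r ∧ w = -(e * r)}) := by
  classical
  -- ### Setup: `q` is a power of the characteristic `p`
  have hq2 : 2 ≤ q := by omega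
  set p := ringChar K with hpdef
  haveI hcharP : CharP K p := ringChar.charP K
  have hpp : p.Prime := CharP.char_is_prime K p
  haveI := Fact.mk hpp
  haveI : ExpChar K p := ExpChar.prime hpp
  obtain ⟨n, -, hcardpn⟩ := FiniteField.card K p
  have hq3pn : q ^ 3 = p ^ (n : ℕ) := by rw [← hK, hcardpn]
  obtain ⟨m, -, hqm⟩ : ∃ m, m ≤ (n : ℕ) ∧ q = p ^ m :=
    (Nat.dvd_prime_pow hpp).mp ⟨q ^ 2, by rw [← hq3pn]; ring⟩
  set F : K →+* K := iterateFrobenius K p m with hFset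
  have hFdef : ∀ a : K, F a = a ^ q := fun a => by
    rw [hFset, iterateFrobenius_def, ← hqm]
  have hcard : ∀ a : K, a ^ q ^ 3 = a := fun a => by
    rw [← hK]; exact FiniteField.pow_card a
  have hF3 : ∀ a : K, F (F (F a)) = a := by
    intro a
    rw [hFdef, hFdef, hFdef, ← pow_mul, ← pow_mul, show q * (q * q) = q ^ 3 by ring, hcard]
  have hF2 : ∀ a : K, F (F a) = a ^ q ^ 2 := fun a => by
    rw [hFdef, hFdef, ← pow_mul, ← pow_two]
  have h3 : (3 : K) ≠ 0 := by
    intro h30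
    have hdvd : p ∣ 3 := (CharP.cast_eq_zero_iff K p 3).mp h30
    have hp3 : p = 3 := (Nat.prime_dvd_prime_iff_eq hpp (by norm_num)).mp hdvd
    have hm1 : m ≠ 0 := by rintro rfl; rw [pow_zero] at hqm; omega
    have : 3 ∣ q := by rw [hqm, hp3]; exact dvd_pow_self 3 hm1
    omega
  -- ### Part 1, the key computation
  have key : ∀ x y : K, x ^ (q ^ 2 + q + 1) = 1 → y ≠ 0 → y ^ q = y →
      memR q (x * y) → ∃ r : K, memR q r ∧ x⁻¹ * y = -r := by
    intro x y hx hy hyq hmem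
    obtain ⟨l, h, hl, ⟨hh0, htr, hN⟩, hz⟩ := hmem
    have hyF : F y = y := by rw [hFdef]; exact hyq
    have hlF : F l = l := by rw [hFdef]; exact hl
    have htrF : h + F h + F (F h) = 0 := by rw [hF2, hFdef]; exact htr
    have hNF : h * F h * F (F h) = 1 := by
      have h1 := hN
      rw [pow_add, pow_add, pow_one, ← hF2, ← hFdef] at h1
      exact h1
    have hx1 : F (F x) * F x * x = 1 := by
      have h1 := hx
      rw [pow_add, pow_add, pow_one, ← hF2, ← hFdef] at h1
      exact h1
    have hx0 : x ≠ 0 := by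
      rintro rfl
      rw [zero_pow (Nat.add_one_ne_zero _)] at hx
      exact one_ne_zero hx.symm
    have hz' : x * y = l + F (F h) - F h := by rw [hF2, hFdef]; exact hz
    have hz1 : F x * y = l + h - F (F h) := by
      have h1 := congrArg F hz'
      simp only [map_mul, map_add, map_sub] at h1
      rwa [hyF, hlF, hF3 h] at h1
    have hz2 : F (F x) * y = l + F h - h := by
      have h1 := congrArg F hz1
      simp only [map_mul, map_add, map_sub] at h1
      rwa [hyF, hlF, hF3 h] at h1
    -- trace of k = x*h is zero
    have hktr : x * h + F x * F h + F (F x) * F (F h) = 0 := by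
      have hmul : (x * h + F x * F h + F (F x) * F (F h)) * y = 0 := by
        linear_combination h * hz' + F h * hz1 + F (F h) * hz2 + l * htrF
      rcases mul_eq_zero.mp hmul with h' | h'
      · exact h'
      · exact absurd h' hy
    have hxinv : x⁻¹ = F x * F (F x) := by
      refine inv_eq_of_mul_eq_one_right ?_
      linear_combination hx1
    -- the witnesses
    set lp : K := -(F x * F (F x) * y) - F (F x) * F (F h) + F x * F h with hlp
    have hlpF : F lp = lp := by
      rw [hlp]
      simp only [map_mul, map_add, map_sub, map_neg]
      rw [hyF, hF3 x, hF3 h]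
      linear_combination (2 : K) * hktr + x * hz1 - x * hz2 - x * htrF
        - F x * hz' + F x * hz2 - F x * htrF
    refine ⟨-(x⁻¹ * y), ⟨lp, x * h, ?_, ⟨mul_ne_zero hx0 hh0, ?_, ?_⟩, ?_⟩, by ring⟩
    · rw [← hFdef]; exact hlpF
    · rw [← hF2, ← hFdef]
      simp only [map_mul]
      exact hktr
    · rw [pow_add, pow_add, pow_one, ← hF2, ← hFdef]
      simp only [map_mul]
      calc x * h * (F x * F h) * (F (F x) * F (F h))
          = (F (F x) * F x * x) * (h * F h * F (F h)) := by ring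
        _ = 1 := by rw [hx1, hNF, mul_one]
    · rw [← hF2, ← hFdef]
      simp only [map_mul]
      rw [hxinv, hlp]; ring
  refine ⟨key, ?_⟩
  -- ### Part 2
  intro e he heq
  have heF : F e = e := by rw [hFdef]; exact heq
  -- 0 is not in R
  have hR0 : ∀ r : K, memR q r → r ≠ 0 := by
    rintro r ⟨l, h, hl, ⟨hh0, htr, hN⟩, rfl⟩ h0
    have hlF : F l = l := by rw [hFdef]; exact hl
    have htrF : h + F h + F (F h) = 0 := by rw [hF2, hFdef]; exact htr
    have s0 : l + F (F h) - F h = 0 := by rw [← hF2, ← hFdef] at h0; exact h0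
    have s1 : l + h - F (F h) = 0 := by
      have h1 := congrArg F s0
      simp only [map_add, map_sub, map_zero] at h1
      rwa [hlF, hF3 h] at h1
    have s2 : l + F h - h = 0 := by
      have h1 := congrArg F s1
      simp only [map_add, map_sub, map_zero] at h1
      rwa [hlF, hF3 h] at h1
    have h3h : (3 : K) * h = 0 := by linear_combination htrF + s1 - s2
    rcases mul_eq_zero.mp h3h with h' | h'
    · exact h3 h'
    · exact hh0 h'
  ext w
  simp only [Set.mem_setOf_eq]
  constructor
  · rintro ⟨x, y, hx, hy, hyq, ⟨r₀, hr₀, hxy⟩, rfl⟩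
    have hy' : y * e⁻¹ ≠ 0 := mul_ne_zero hy (inv_ne_zero he)
    have hyq' : (y * e⁻¹) ^ q = y * e⁻¹ := by
      rw [mul_pow, hyq, inv_pow, heq]
    have hmem : memR q (x * (y * e⁻¹)) := by
      have hxe : x * (y * e⁻¹) = r₀ := by
        rw [← mul_assoc, hxy]; field_simp
      rw [hxe]; exact hr₀
    obtain ⟨r, hr, hre⟩ := key x (y * e⁻¹) hx hy' hyq' hmem
    refine ⟨r, hr, ?_⟩
    calc x⁻¹ * y = x⁻¹ * (y * e⁻¹) * e := by
          rw [mul_assoc x⁻¹ (y * e⁻¹) e, mul_assoc y e⁻¹ e, inv_mul_cancel₀ he, mul_one]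
      _ = -r * e := by rw [hre]
      _ = -(e * r) := by ring
  · rintro ⟨r, hr, rfl⟩
    have hr0 : r ≠ 0 := hR0 r hr
    set a : K := r ^ (q ^ 2 + q + 1) with ha
    have ha0 : a ≠ 0 := pow_ne_zero _ hr0
    have haq : a ^ q = a := by
      calc a ^ q = r ^ ((q ^ 2 + q + 1) * q) := by rw [ha, ← pow_mul]
        _ = r ^ q ^ 3 * r ^ (q ^ 2 + q) := by
            rw [show (q ^ 2 + q + 1) * q = q ^ 3 + (q ^ 2 + q) by ring, pow_add]
        _ = r * r ^ (q ^ 2 + q) := by rw [hcard r]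
        _ = a := by rw [ha]; ring
    -- the cube root of the norm of r
    have hq3mod : q ^ 3 % 3 = 2 := by
      rw [Nat.pow_mod, hq]
    have hdvd3 : 3 ∣ 2 * q ^ 3 - 1 := by
      obtain ⟨c, hc⟩ : ∃ c, q ^ 3 = c := ⟨_, rfl⟩
      rw [hc] at hq3mod ⊢
      omega
    set t : ℕ := (2 * q ^ 3 - 1) / 3 with ht
    have h3t : 3 * t = 2 * q ^ 3 - 1 := Nat.mul_div_cancel' hdvd3
    set yr : K := a ^ t with hyr
    have hyr0 : yr ≠ 0 := pow_ne_zero _ ha0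
    have hyrq : yr ^ q = yr := by
      rw [hyr, ← pow_mul, mul_comm, pow_mul, haq]
    have hyrq2 : yr ^ q ^ 2 = yr := by
      rw [pow_two, pow_mul, hyrq, hyrq]
    have hy3 : yr ^ 3 = a := by
      have hq3pos : 1 ≤ q ^ 3 := Nat.one_le_pow _ _ (by omega)
      have h1 : yr ^ 3 * a = a * a := by
        calc yr ^ 3 * a = a ^ (3 * t) * a := by rw [hyr, ← pow_mul, mul_comm t 3]
          _ = a ^ (3 * t + 1) := by rw [pow_add, pow_one]
          _ = a ^ (q ^ 3 * 2) := by
              rw [h3t, show 2 * q ^ 3 - 1 + 1 = q ^ 3 * 2 by omega]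
          _ = (a ^ q ^ 3) ^ 2 := by rw [pow_mul]
          _ = a * a := by rw [hcard a, pow_two]
      exact mul_right_cancel₀ ha0 h1
    have hyrN : yr ^ (q ^ 2 + q + 1) = a := by
      rw [pow_add, pow_add, pow_one, hyrq2, hyrq, ← hy3]; ring
    -- apply part 1 to x' = r / yr, y' = yr to see that -yr²/r ∈ R
    have hx'N : (r * yr⁻¹) ^ (q ^ 2 + q + 1) = 1 := by
      rw [mul_pow, inv_pow, hyrN, ← ha]
      exact mul_inv_cancel₀ ha0
    have hx'y : r * yr⁻¹ * yr = r := by field_simp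
    obtain ⟨r₁, hr₁, hre1⟩ := key (r * yr⁻¹) yr hx'N hyr0 hyrq (by rw [hx'y]; exact hr)
    rw [mul_inv_rev, inv_inv] at hre1
    -- hre1 : yr * r⁻¹ * yr = -r₁ (since (r * yr⁻¹)⁻¹ = yr * r⁻¹)
    refine ⟨yr * r⁻¹, -(e * yr), ?_, ?_, ?_, ⟨r₁, hr₁, ?_⟩, ?_⟩
    · rw [mul_pow, inv_pow, hyrN, ← ha]
      exact mul_inv_cancel₀ ha0
    · exact neg_ne_zero.mpr (mul_ne_zero he hyr0)
    · rw [← hFdef]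
      simp only [map_neg, map_mul]
      rw [heF, hFdef, hyrq]
    · linear_combination (-e) * hre1
    · rw [mul_inv_rev, inv_inv]
      field_simp
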